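/- For any function f on a finite nonempty type X and any q > 0, the q-maximum satisfies: max_x f(x) ≤ q-max(f) ≤ max_x f(x) - ln_q(1/|X|), where q-max(f) = sup over probability distributions P of (E_{X~P}[f(X)] + S_q(P)). -/

import Mathlib

open Real Finset

noncomputable def qlog (q x : ℝ) : ℝ :=
  if q = 1 then Real.log x else (x ^ (q - 1) - 1) / (q - 1)

noncomputable def qexp (q x : ℝ) : ℝ :=
  if q = 1 then Real.exp x else (max (1 + (q - 1) * x) 0) ^ (1 / (q - 1))

/-- The summand `-p · ln_q p` with the convention `0 · ln_q 0 = 0`. -/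
noncomputable def entTerm (q p : ℝ) : ℝ := if p = 0 then 0 else -p * qlog q p

def IsPmf {X : Type*} [Fintype X] (P : X → ℝ) : Prop :=
  (∀ x, 0 ≤ P x) ∧ ∑ x, P x = 1

/-- Tsallis entropy. -/
noncomputable def Sq {X : Type*} [Fintype X] (q : ℝ) (P : X → ℝ) : ℝ :=
  ∑ x, entTerm q (P x)

/-- The q-maximum operator. -/
noncomputable def qmax {X : Type*} [Fintype X] (q : ℝ) (f : X → ℝ) : ℝ :=
  sSup {y | ∃ P : X → ℝ, IsPmf P ∧ y = (∑ x, P x * f x) + Sq q P}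

lemma entTerm_eq_of_ne {q : ℝ} (hq : 0 < q) (hq1 : q ≠ 1) {p : ℝ} (hp : 0 ≤ p) :
    entTerm q p = (p - p ^ q) / (q - 1) := by
  rcases eq_or_lt_of_le hp with h | h
  · simp [entTerm, ← h, Real.zero_rpow hq.ne']
  · rw [entTerm, if_neg h.ne', qlog, if_neg hq1]
    have hpq : p ^ q = p ^ (q - 1) * p := by
      rw [← Real.rpow_add_one h.ne' (q - 1)]
      norm_num
    rw [hpq]
    have h1 : q - 1 ≠ 0 := sub_ne_zero.mpr hq1
    field_simp
    ring

lemma entTerm_eq_one {p : ℝ} : entTerm 1 p = Real.negMulLog p := by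
  rcases eq_or_ne p 0 with rfl | h
  · simp [entTerm, Real.negMulLog]
  · simp [entTerm, h, qlog, Real.negMulLog]

lemma concaveOn_entTerm {q : ℝ} (hq : 0 < q) :
    ConcaveOn ℝ (Set.Ici 0) (entTerm q) := by
  rcases eq_or_ne q 1 with rfl | hq1
  · have : entTerm 1 = Real.negMulLog := funext fun p => entTerm_eq_one
    rw [this]; exact Real.concaveOn_negMulLog
  · have h1 : q - 1 ≠ 0 := sub_ne_zero.mpr hq1
    have h2 : (1:ℝ) - q ≠ 0 := fun h => h1 (by linarith [sub_eq_zero.mp h])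
    rcases lt_or_gt_of_ne hq1 with h | h
    · have hc : ConcaveOn ℝ (Set.Ici 0) (fun p : ℝ => p ^ q - p) :=
        (Real.strictConcaveOn_rpow hq h).concaveOn.sub (convexOn_id (convex_Ici 0))
      have hsmul := hc.smul (c := 1 / (1 - q)) (div_pos one_pos (by linarith)).le
      refine hsmul.congr fun p hp => ?_
      rw [entTerm_eq_of_ne hq hq1 hp]; simp only [smul_eq_mul]
      field_simp
      ring
    · have hc : ConcaveOn ℝ (Set.Ici 0) (fun p : ℝ => p - p ^ q) :=
        (concaveOn_id (convex_Ici 0)).sub (convexOn_rpow h.le)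
      have hsmul := hc.smul (c := 1 / (q - 1)) (div_pos one_pos (by linarith)).le
      refine hsmul.congr fun p hp => ?_
      rw [entTerm_eq_of_ne hq hq1 hp]; simp only [smul_eq_mul]
      field_simp

lemma qlog_one {q : ℝ} : qlog q 1 = 0 := by
  unfold qlog; split <;> simp

lemma Sq_le {X : Type*} [Fintype X] [Nonempty X] {q : ℝ} (hq : 0 < q) {P : X → ℝ}
    (hP : IsPmf P) : Sq q P ≤ -qlog q (1 / (Fintype.card X : ℝ)) := by
  set n : ℝ := (Fintype.card X : ℝ) with hn
  have hn0 : 0 < n := Nat.cast_pos.mpr Fintype.card_pos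
  have hjen := (concaveOn_entTerm hq).le_map_sum (t := Finset.univ)
    (w := fun _ : X => 1 / n) (p := P)
    (fun i _ => by positivity)
    (by rw [Finset.sum_const, Finset.card_univ, nsmul_eq_mul, ← hn]; field_simp)
    (fun i _ => hP.1 i)
  have hsum : ∑ x : X, (1 / n) • P x = 1 / n := by
    rw [← Finset.smul_sum, hP.2]; simp
  rw [hsum] at hjen
  have hsum2 : ∑ x : X, (1 / n) • entTerm q (P x) = (1 / n) * Sq q P := by
    rw [← Finset.smul_sum]; rfl
  rw [hsum2] at hjen
  have hE : entTerm q (1 / n) = -(1 / n) * qlog q (1 / n) := by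
    rw [entTerm, if_neg (by positivity)]
  rw [hE] at hjen
  have := mul_le_mul_of_nonneg_left hjen hn0.le
  calc Sq q P = n * ((1/n) * Sq q P) := by field_simp
    _ ≤ n * (-(1/n) * qlog q (1/n)) := this
    _ = -qlog q (1/n) := by field_simp

theorem stmt6 {X : Type*} [Fintype X] [Nonempty X] (q : ℝ) (hq : 0 < q) (f : X → ℝ) :
    (⨆ x, f x) ≤ qmax q f ∧
    qmax q f ≤ (⨆ x, f x) - qlog q (1 / (Fintype.card X : ℝ)) := by
  classical
  set S := {y | ∃ P : X → ℝ, IsPmf P ∧ y = (∑ x, P x * f x) + Sq q P} with hS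
  have hdelta : ∀ x : X, f x ∈ S := by
    intro x
    refine ⟨fun y => if y = x then 1 else 0, ⟨fun y => by dsimp only; split <;> norm_num, by simp⟩, ?_⟩
    have h1 : ∑ y, (if y = x then (1:ℝ) else 0) * f y = f x := by
      simp [ite_mul]
    have h2 : Sq q (fun y => if y = x then (1:ℝ) else 0) = 0 := by
      unfold Sq
      refine Finset.sum_eq_zero fun y _ => ?_
      rcases eq_or_ne y x with rfl | h
      · simp [entTerm, qlog_one]
      · simp [entTerm, h]
    rw [h1, h2, add_zero]
  have hub : ∀ y ∈ S, y ≤ (⨆ x, f x) - qlog q (1 / (Fintype.card X : ℝ)) := by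
    rintro y ⟨P, hP, rfl⟩
    have h1 : ∑ x, P x * f x ≤ ⨆ x, f x := by
      calc ∑ x, P x * f x ≤ ∑ x, P x * (⨆ x, f x) := by
            refine Finset.sum_le_sum fun i _ => ?_
            exact mul_le_mul_of_nonneg_left
              (le_ciSup (Set.Finite.bddAbove (Set.finite_range f)) i) (hP.1 i)
        _ = ⨆ x, f x := by rw [← Finset.sum_mul, hP.2, one_mul]
    have h2 := Sq_le hq hP
    linarith
  have hBdd : BddAbove S := ⟨_, hub⟩
  exact ⟨ciSup_le fun x => le_csSup hBdd (hdelta x),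
    csSup_le ⟨f (Classical.arbitrary X), hdelta _⟩ hub⟩
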